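/- (KKT form of the truncated entropic mirror descent update.) Let K, M ≥ 1, let w′ ∈ ℝ^{K×M} have all entries strictly positive, let m̃ ∈ ℝ^{K×M} with m̃(i,j) = m(i) for some m ∈ ℝ^K, let η(1),…,η(M) > 0, let ε > 0 with K·M·ε < 1, and let ψ(w) = Σ_{i,j} (1/η(j)) w(i,j) log w(i,j) with Bregman divergence D_ψ. Let w be a minimizer of w ↦ ⟨m̃, w⟩ + D_ψ(w, w′) over Ω = { w ∈ Δ_{K×M} : w(i,j) ≥ ε for all i, j }. Then there exist λ ∈ ℝ and μ ∈ ℝ^{K×M} with μ(i,j) ≥ 0 such that for all (i,j): w(i,j) = w′(i,j)·exp( η(j)·( −m(i) + λ + μ(i,j) ) ), and μ(i,j) = 0 whenever w(i,j) > ε. -/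
import Mathlib

open Filter Topology

lemma tangent_xlogx (x y : ℝ) (hx : 0 < x) (hy : 0 < y) :
    y * Real.log y - x * Real.log x ≤ (Real.log y + 1) * (y - x) := by
  have h := Real.log_le_sub_one_of_pos (div_pos hy hx)
  rw [Real.log_div hy.ne' hx.ne'] at h
  have h2 : x * (Real.log y - Real.log x) ≤ y - x := by
    have := mul_le_mul_of_nonneg_left h hx.le
    have hxy : x * (y / x) = y := by field_simp
    nlinarith
  nlinarith

lemma kkt_exchange {ι : Type*} [Fintype ι] [DecidableEq ι]
    (r s : ι → ℝ) (hs : ∀ p, 0 < s p) (ε : ℝ) (hε : 0 < ε)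
    (w : ι → ℝ) (hwε : ∀ p, ε ≤ w p)
    (hmin : ∀ v : ι → ℝ, (∀ p, ε ≤ v p) → (∑ p, v p = ∑ p, w p) →
      ∑ p, (r p * w p + s p * w p * Real.log (w p)) ≤
      ∑ p, (r p * v p + s p * v p * Real.log (v p)))
    (a b : ι) (ha : ε < w a) :
    r a + s a * (Real.log (w a) + 1) ≤ r b + s b * (Real.log (w b) + 1) := by
  rcases eq_or_ne a b with rfl | hab
  · exact le_refl _
  have hwa : 0 < w a := lt_of_lt_of_le hε (hwε a)
  have hwb : 0 < w b := lt_of_lt_of_le hε (hwε b)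
  -- step: for all small positive δ
  have step : ∀ δ : ℝ, 0 < δ → δ ≤ w a - ε →
      r a + s a * (Real.log (w a - δ) + 1) ≤ r b + s b * (Real.log (w b + δ) + 1) := by
    intro δ hδ0 hδle
    set v : ι → ℝ := fun p => if p = b then w b + δ else if p = a then w a - δ else w p with hv
    have hva : v a = w a - δ := by simp [hv, hab]
    have hvb : v b = w b + δ := by simp [hv]
    have hvo : ∀ p, p ≠ a → p ≠ b → v p = w p := by
      intro p h1 h2; simp [hv, h1, h2]
    have hv1 : ∀ p, ε ≤ v p := by
      intro p
      by_cases hpb : p = b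
      · rw [hpb, hvb]; have := hwε b; linarith
      by_cases hpa : p = a
      · rw [hpa, hva]; linarith
      · rw [hvo p hpa hpb]; exact hwε p
    have hv2 : ∑ p, v p = ∑ p, w p := by
      have hz : ∑ p, (v p - w p) = 0 := by
        rw [← Finset.sum_subset (Finset.subset_univ ({a, b} : Finset ι))
          (fun p _ hp => by
            simp only [Finset.mem_insert, Finset.mem_singleton, not_or] at hp
            rw [hvo p hp.1 hp.2]; ring)]
        rw [Finset.sum_pair hab, hva, hvb]; ring
      rw [Finset.sum_sub_distrib] at hz
      linarith
    have hm := hmin v hv1 hv2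
    have hdiff : ∑ p, (r p * v p + s p * v p * Real.log (v p)) -
        ∑ p, (r p * w p + s p * w p * Real.log (w p)) =
        (r a * v a + s a * v a * Real.log (v a) - (r a * w a + s a * w a * Real.log (w a))) +
        (r b * v b + s b * v b * Real.log (v b) - (r b * w b + s b * w b * Real.log (w b))) := by
      rw [← Finset.sum_sub_distrib]
      rw [← Finset.sum_subset (Finset.subset_univ ({a, b} : Finset ι))
        (fun p _ hp => by
          simp only [Finset.mem_insert, Finset.mem_singleton, not_or] at hp
          rw [hvo p hp.1 hp.2]; ring)]
      rw [Finset.sum_pair hab]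
    have h0a : 0 < w a - δ := by linarith
    have h0b : 0 < w b + δ := by linarith
    have t1 : (w a - δ) * Real.log (w a - δ) - w a * Real.log (w a) ≤
        (Real.log (w a - δ) + 1) * ((w a - δ) - w a) := tangent_xlogx _ _ hwa h0a
    have t2 : (w b + δ) * Real.log (w b + δ) - w b * Real.log (w b) ≤
        (Real.log (w b + δ) + 1) * ((w b + δ) - w b) := tangent_xlogx _ _ hwb h0b
    have t1' := mul_le_mul_of_nonneg_left t1 (hs a).le
    have t2' := mul_le_mul_of_nonneg_left t2 (hs b).le
    rw [hva, hvb] at hdiff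
    have hchain : 0 ≤ δ * ((r b + s b * (Real.log (w b + δ) + 1)) -
        (r a + s a * (Real.log (w a - δ) + 1))) := by nlinarith
    nlinarith
  -- limit δ → 0⁺
  have hlogA : ContinuousAt (fun δ : ℝ => Real.log (w a - δ)) 0 :=
    (Real.continuousAt_log (by simpa using hwa.ne')).comp
      (by fun_prop : ContinuousAt (fun δ : ℝ => w a - δ) 0)
  have hlogB : ContinuousAt (fun δ : ℝ => Real.log (w b + δ)) 0 :=
    (Real.continuousAt_log (by simpa using hwb.ne')).comp
      (by fun_prop : ContinuousAt (fun δ : ℝ => w b + δ) 0)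
  have ca : ContinuousAt (fun δ : ℝ => r a + s a * (Real.log (w a - δ) + 1)) 0 :=
    continuousAt_const.add (continuousAt_const.mul (hlogA.add continuousAt_const))
  have cb : ContinuousAt (fun δ : ℝ => r b + s b * (Real.log (w b + δ) + 1)) 0 :=
    continuousAt_const.add (continuousAt_const.mul (hlogB.add continuousAt_const))
  have ta : Tendsto (fun δ : ℝ => r a + s a * (Real.log (w a - δ) + 1)) (𝓝[>] 0)
      (𝓝 (r a + s a * (Real.log (w a) + 1))) := by
    have h0 : Tendsto (fun δ : ℝ => r a + s a * (Real.log (w a - δ) + 1)) (𝓝[>] (0:ℝ))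
        (𝓝 (r a + s a * (Real.log (w a - 0) + 1))) :=
      ca.tendsto.mono_left nhdsWithin_le_nhds
    simpa using h0
  have tb : Tendsto (fun δ : ℝ => r b + s b * (Real.log (w b + δ) + 1)) (𝓝[>] 0)
      (𝓝 (r b + s b * (Real.log (w b) + 1))) := by
    have h0 : Tendsto (fun δ : ℝ => r b + s b * (Real.log (w b + δ) + 1)) (𝓝[>] (0:ℝ))
        (𝓝 (r b + s b * (Real.log (w b + 0) + 1))) :=
      cb.tendsto.mono_left nhdsWithin_le_nhds
    simpa using h0
  have hev : (fun δ : ℝ => r a + s a * (Real.log (w a - δ) + 1)) ≤ᶠ[𝓝[>] (0:ℝ)]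
      (fun δ : ℝ => r b + s b * (Real.log (w b + δ) + 1)) := by
    have hmem : Set.Ioc (0:ℝ) (w a - ε) ∈ 𝓝[>] (0:ℝ) :=
      Ioc_mem_nhdsGT_of_mem ⟨le_refl 0, by linarith⟩
    filter_upwards [hmem] with δ hδ
    exact step δ hδ.1 hδ.2
  exact le_of_tendsto_of_tendsto ta tb hev

/-- KKT form of the truncated entropic mirror descent update: any minimizer of
`w ↦ ⟨m̃, w⟩ + D_ψ(w, w′)` over the truncated simplex
`Ω = {w ∈ Δ_{K×M} : w(i,j) ≥ ε}` admits a Lagrange multiplier `λ ∈ ℝ` for the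
sum-to-one constraint and non-negative multipliers `μ(i,j)` for the lower
bounds such that `w(i,j) = w′(i,j)·exp(η(j)·(−m(i) + λ + μ(i,j)))`, with
complementary slackness `μ(i,j) = 0` whenever `w(i,j) > ε`. -/
theorem kkt_truncated_entropic_update (K M : ℕ) (hK : 1 ≤ K) (hM : 1 ≤ M)
    (w' : Fin K → Fin M → ℝ) (hw' : ∀ i j, 0 < w' i j)
    (m : Fin K → ℝ) (mt : Fin K → Fin M → ℝ) (hmt : ∀ i j, mt i j = m i)
    (η : Fin M → ℝ) (hη : ∀ j, 0 < η j)
    (ε : ℝ) (hε : 0 < ε) (hKMε : (K : ℝ) * M * ε < 1)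
    (ψ : (Fin K → Fin M → ℝ) → ℝ)
    (hψ : ∀ w, ψ w = ∑ i, ∑ j, (1 / η j) * w i j * Real.log (w i j))
    (D : (Fin K → Fin M → ℝ) → (Fin K → Fin M → ℝ) → ℝ)
    (hD : ∀ y x, D y x = ψ y - ψ x -
      ∑ i, ∑ j, (1 / η j) * (Real.log (x i j) + 1) * (y i j - x i j))
    (Ω : Set (Fin K → Fin M → ℝ))
    (hΩ : Ω = {w | (∀ i j, ε ≤ w i j) ∧ ∑ i, ∑ j, w i j = 1})
    (w : Fin K → Fin M → ℝ) (hwΩ : w ∈ Ω)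
    (hwmin : ∀ v ∈ Ω,
      (∑ i, ∑ j, mt i j * w i j) + D w w' ≤
      (∑ i, ∑ j, mt i j * v i j) + D v w') :
    ∃ (lam : ℝ) (μ : Fin K → Fin M → ℝ),
      (∀ i j, 0 ≤ μ i j) ∧
      (∀ i j, w i j = w' i j * Real.exp (η j * (-m i + lam + μ i j))) ∧
      (∀ i j, ε < w i j → μ i j = 0) := by
  rw [hΩ] at hwΩ
  obtain ⟨hwε, hwsum⟩ := hwΩ
  have hps : ∀ f : Fin K → Fin M → ℝ,
      (∑ a, ∑ b, f a b) = ∑ p : Fin K × Fin M, f p.1 p.2 := by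
    intro f
    rw [← Finset.sum_product', Finset.univ_product_univ]
  -- the separable objective
  set r : Fin K × Fin M → ℝ :=
    fun p => m p.1 - (1 / η p.2) * (Real.log (w' p.1 p.2) + 1) with hr
  set s : Fin K × Fin M → ℝ := fun p => 1 / η p.2 with hss
  have hspos : ∀ p : Fin K × Fin M, 0 < s p := fun p => by
    simp [hss]; exact hη p.2
  set C : ℝ := -ψ w' + ∑ p : Fin K × Fin M,
      (1 / η p.2) * (Real.log (w' p.1 p.2) + 1) * w' p.1 p.2 with hC
  have hobj : ∀ u : Fin K → Fin M → ℝ,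
      (∑ a, ∑ b, mt a b * u a b) + D u w' =
      (∑ p : Fin K × Fin M, (r p * u p.1 p.2 + s p * u p.1 p.2 * Real.log (u p.1 p.2))) + C := by
    intro u
    rw [hD, hψ u]
    rw [hps (fun a b => mt a b * u a b),
        hps (fun a b => (1 / η b) * u a b * Real.log (u a b)),
        hps (fun a b => (1 / η b) * (Real.log (w' a b) + 1) * (u a b - w' a b))]
    simp only [hmt, hr, hss, hC]
    have e1 : ∑ p : Fin K × Fin M,
        (1 / η p.2) * (Real.log (w' p.1 p.2) + 1) * (u p.1 p.2 - w' p.1 p.2) =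
        ∑ p : Fin K × Fin M, (1 / η p.2) * (Real.log (w' p.1 p.2) + 1) * u p.1 p.2 -
        ∑ p : Fin K × Fin M, (1 / η p.2) * (Real.log (w' p.1 p.2) + 1) * w' p.1 p.2 := by
      rw [← Finset.sum_sub_distrib]
      exact Finset.sum_congr rfl fun p _ => by ring
    have e2 : ∑ p : Fin K × Fin M,
        ((m p.1 - 1 / η p.2 * (Real.log (w' p.1 p.2) + 1)) * u p.1 p.2 +
          1 / η p.2 * u p.1 p.2 * Real.log (u p.1 p.2)) =
        ∑ p : Fin K × Fin M, m p.1 * u p.1 p.2 +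
        ∑ p : Fin K × Fin M, 1 / η p.2 * u p.1 p.2 * Real.log (u p.1 p.2) -
        ∑ p : Fin K × Fin M, (1 / η p.2) * (Real.log (w' p.1 p.2) + 1) * u p.1 p.2 := by
      rw [← Finset.sum_add_distrib, ← Finset.sum_sub_distrib]
      exact Finset.sum_congr rfl fun p _ => by ring
    rw [e1, e2]
    ring
  have hWsum : ∑ p : Fin K × Fin M, w p.1 p.2 = 1 := by
    rw [← hps w]; exact hwsum
  have hmin : ∀ v : Fin K × Fin M → ℝ, (∀ p, ε ≤ v p) →
      (∑ p, v p = ∑ p : Fin K × Fin M, w p.1 p.2) →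
      ∑ p : Fin K × Fin M, (r p * w p.1 p.2 + s p * w p.1 p.2 * Real.log (w p.1 p.2)) ≤
      ∑ p, (r p * v p + s p * v p * Real.log (v p)) := by
    intro v hv1 hv2
    have hv' : (fun a b => v (a, b)) ∈ Ω := by
      rw [hΩ]
      refine ⟨fun a b => hv1 (a, b), ?_⟩
      rw [hps (fun a b => v (a, b))]
      simpa using hv2.trans hWsum
    have h := hwmin _ hv'
    rw [hobj w, hobj (fun a b => v (a, b))] at h
    simpa using h
  have key : ∀ a b : Fin K × Fin M, ε < w a.1 a.2 →
      r a + s a * (Real.log (w a.1 a.2) + 1) ≤ r b + s b * (Real.log (w b.1 b.2) + 1) :=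
    fun a b ha =>
      kkt_exchange r s hspos ε hε (fun p => w p.1 p.2) (fun p => hwε p.1 p.2) hmin a b ha
  have hex : ∃ p : Fin K × Fin M, ε < w p.1 p.2 := by
    by_contra h
    push_neg at h
    have hle : ∑ p : Fin K × Fin M, w p.1 p.2 ≤ ∑ _p : Fin K × Fin M, ε :=
      Finset.sum_le_sum fun p _ => h p
    rw [hWsum, Finset.sum_const, Finset.card_univ, Fintype.card_prod,
      Fintype.card_fin, Fintype.card_fin, nsmul_eq_mul] at hle
    push_cast at hle
    nlinarith
  obtain ⟨p0, hp0⟩ := hex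
  set lam : ℝ := r p0 + s p0 * (Real.log (w p0.1 p0.2) + 1) with hlam
  refine ⟨lam, fun a b => (r (a, b) + s (a, b) * (Real.log (w a b) + 1)) - lam, ?_, ?_, ?_⟩
  · intro a b
    have := key p0 (a, b) hp0
    simp only [hlam]
    linarith
  · intro a b
    have hwab : 0 < w a b := lt_of_lt_of_le hε (hwε a b)
    have hηb : η b ≠ 0 := (hη b).ne'
    have hexp : η b * (-m a + lam + ((r (a, b) + s (a, b) * (Real.log (w a b) + 1)) - lam)) =
        Real.log (w a b) - Real.log (w' a b) := by
      simp only [hr, hss]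
      field_simp
      ring
    rw [hexp, Real.exp_sub, Real.exp_log hwab, Real.exp_log (hw' a b)]
    rw [mul_div_cancel₀ _ (hw' a b).ne']
  · intro a b hab
    have h1 := key (a, b) p0 hab
    have h2 := key p0 (a, b) hp0
    simp only [hlam] at h1 h2 ⊢
    linarith
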